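/- arXiv:alg-geom/9710025 — 5 statements merged into one kernel-verified Lean document; each statement's English description precedes it below -/
import Mathlib

section
/- For a binary linear [n,k,d] code (a k-dimensional linear subspace C of F_2^n in which every nonzero word has Hamming weight at least d), one has n ≥ Σ_{i=0}^{k-1} ⌈d/2^i⌉ (the Griesmer bound). -/
open Finset
lemma ceil_eq_natdiv (d i : ℕ) : ⌈(d:ℚ)/2^i⌉ = ((d + 2^i - 1)/2^i : ℕ) := by
  obtain ⟨p, hp, hpe⟩ : ∃ p : ℕ, 0 < p ∧ (2:ℕ)^i = p := ⟨2^i, pow_pos (by norm_num) i, rfl⟩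
  have hpe' : (2:ℚ)^i = (p:ℚ) := by exact_mod_cast congrArg (Nat.cast : ℕ → ℚ) hpe
  rw [hpe, hpe']
  obtain ⟨q, hq⟩ : ∃ q, (d + p - 1)/p = q := ⟨_, rfl⟩
  obtain ⟨m, hm⟩ : ∃ m, p * q = m := ⟨_, rfl⟩
  have hdm := Nat.div_add_mod (d + p - 1) p
  rw [hq, hm] at hdm
  have hmlt : (d + p - 1) % p < p := Nat.mod_lt _ hp
  have h1 : d ≤ m := by omega
  have h2 : m < d + p := by omega
  rw [hq]
  have hpq : (0:ℚ) < (p:ℚ) := by exact_mod_cast hp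
  rw [Int.ceil_eq_iff, div_le_iff₀ hpq, lt_div_iff₀ hpq]
  have e1 : (p:ℚ) * q = m := by exact_mod_cast hm
  refine ⟨?_, ?_⟩
  · have : (m:ℚ) < d + p := by exact_mod_cast h2
    push_cast
    nlinarith
  · have : (d:ℚ) ≤ m := by exact_mod_cast h1
    push_cast
    nlinarith


lemma zmod2_cases (a : ZMod 2) : a = 0 ∨ a = 1 := by fin_cases a <;> [exact Or.inl rfl; exact Or.inr rfl]

lemma div_step (d i : ℕ) : (d + 2^(i+1) - 1)/2^(i+1) = ((d+1)/2 + 2^i - 1)/2^i := by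
  have hp : 0 < 2^i := pow_pos (by norm_num) i
  obtain ⟨p, hp, hpe⟩ : ∃ p : ℕ, 0 < p ∧ (2:ℕ)^i = p := ⟨2^i, hp, rfl⟩
  have e1 : (2:ℕ)^(i+1) = 2 * p := by rw [pow_succ, hpe]; ring
  rw [e1, hpe, ← Nat.div_div_eq_div_mul]
  congr 1
  omega

lemma griesmer_aux : ∀ (k : ℕ) (ι : Type) [Fintype ι] (d : ℕ)
    (C : Submodule (ZMod 2) (ι → ZMod 2)),
    Module.finrank (ZMod 2) C = k →
    (∀ w ∈ C, w ≠ 0 → d ≤ hammingNorm w) →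
    ∑ i ∈ Finset.range k, (d + 2^i - 1)/2^i ≤ Fintype.card ι := by
  intro k
  induction k with
  | zero => intro ι _ d C hk hd; simp
  | succ k ih =>
    intro ι _ d C hk hd
    classical
    have hCbot : C ≠ ⊥ := by
      intro h
      rw [h] at hk
      simp at hk
    obtain ⟨c₀, hc₀C, hc₀⟩ := Submodule.exists_mem_ne_zero_of_ne_bot hCbot
    have hex : ∃ m, ∃ x, x ∈ C ∧ x ≠ 0 ∧ hammingNorm x = m := ⟨_, c₀, hc₀C, hc₀, rfl⟩
    obtain ⟨c, hcC, hc0, hcw⟩ := Nat.find_spec hex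
    have hmin : ∀ x ∈ C, x ≠ 0 → hammingNorm c ≤ hammingNorm x := by
      intro x hx hx0
      rw [hcw]
      exact Nat.find_le ⟨x, hx, hx0, rfl⟩
    set w := hammingNorm c with hw
    -- key: codewords supported in supp c are 0 or c
    have hker : ∀ x ∈ C, (∀ i, c i = 0 → x i = 0) → x = 0 ∨ x = c := by
      intro x hx hsupp
      by_cases hx0 : x = 0
      · exact Or.inl hx0
      right
      have hsub : (Finset.univ.filter (fun i => x i ≠ 0)) ⊆ (Finset.univ.filter (fun i => c i ≠ 0)) := by
        intro i hi
        simp only [mem_filter, Finset.mem_univ, true_and] at hi ⊢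
        intro hci
        exact hi (hsupp i hci)
      have hcard : (Finset.univ.filter (fun i => c i ≠ 0)).card ≤ (Finset.univ.filter (fun i => x i ≠ 0)).card :=
        hmin x hx hx0
      have heq : (Finset.univ.filter (fun i => x i ≠ 0)) = (Finset.univ.filter (fun i => c i ≠ 0)) :=
        Finset.eq_of_subset_of_card_le hsub hcard
      funext i
      rcases zmod2_cases (c i) with h | h
      · rw [h]; exact hsupp i h
      · rw [h]
        have hi : i ∈ (Finset.univ.filter (fun i => c i ≠ 0)) := by
          simp only [mem_filter, Finset.mem_univ, true_and]
          rw [h]; exact one_ne_zero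
        rw [← heq] at hi
        simp only [mem_filter, Finset.mem_univ, true_and] at hi
        rcases zmod2_cases (x i) with h' | h'
        · exact absurd h' hi
        · exact h'
    -- residual code
    let ι' := {i : ι // c i = 0}
    let π : (ι → ZMod 2) →ₗ[ZMod 2] (ι' → ZMod 2) :=
      LinearMap.funLeft (ZMod 2) (ZMod 2) (fun j : ι' => (j : ι))
    let f : C →ₗ[ZMod 2] (ι' → ZMod 2) := π.comp C.subtype
    have hfc : f ⟨c, hcC⟩ = 0 := by
      funext j
      exact j.2
    have hkerf : LinearMap.ker f = Submodule.span (ZMod 2) {(⟨c, hcC⟩ : C)} := by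
      apply le_antisymm
      · intro x hxk
        have hx' : ∀ i, c i = 0 → (x : ι → ZMod 2) i = 0 := by
          intro i hci
          have := congrFun (LinearMap.mem_ker.mp hxk) ⟨i, hci⟩
          exact this
        rcases hker x x.2 hx' with h | h
        · have : x = 0 := Subtype.ext h
          rw [this]
          exact Submodule.zero_mem _
        · have : x = ⟨c, hcC⟩ := Subtype.ext h
          rw [this]
          exact Submodule.mem_span_singleton_self _
      · rw [Submodule.span_singleton_le_iff_mem]
        exact LinearMap.mem_ker.mpr hfc
    have hkrank : Module.finrank (ZMod 2) (LinearMap.ker f) = 1 := by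
      rw [hkerf]
      exact finrank_span_singleton (by
        intro h
        exact hc0 (congrArg Subtype.val h))
    have hrank := LinearMap.finrank_range_add_finrank_ker f
    rw [hk, hkrank] at hrank
    have hrrank : Module.finrank (ZMod 2) (LinearMap.range f) = k := by omega
    -- min distance of residual code
    have hd' : ∀ y ∈ LinearMap.range f, y ≠ 0 → (d+1)/2 ≤ hammingNorm y := by
      intro y hy hy0
      obtain ⟨x, hxy⟩ := hy
      have hx0 : (x : ι → ZMod 2) ≠ 0 := by
        intro h
        apply hy0
        rw [← hxy]
        have : x = 0 := Subtype.ext h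
        rw [this, map_zero]
      have hxc : (x : ι → ZMod 2) ≠ c := by
        intro h
        apply hy0
        rw [← hxy]
        have : x = ⟨c, hcC⟩ := Subtype.ext h
        rw [this, hfc]
      set n1 := (Finset.univ.filter (fun i : ι => (x : ι → ZMod 2) i ≠ 0 ∧ c i ≠ 0)).card with hn1
      set n2 := (Finset.univ.filter (fun i : ι => c i = 0 ∧ (x : ι → ZMod 2) i ≠ 0)).card with hn2
      set n3 := (Finset.univ.filter (fun i : ι => (x : ι → ZMod 2) i = 0 ∧ c i ≠ 0)).card with hn3
      -- hammingNorm y = n2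
      have hy2 : hammingNorm y = n2 := by
        rw [← hxy]
        have e1 : hammingNorm (f x) = Fintype.card {j : ι' // (x : ι → ZMod 2) j.1 ≠ 0} := by
          rw [Fintype.card_subtype]
          rfl
        rw [e1, hn2, ← Fintype.card_subtype]
        exact Fintype.card_congr
          (Equiv.subtypeSubtypeEquivSubtypeInter (fun i => c i = 0) (fun i => (x : ι → ZMod 2) i ≠ 0))
      -- hammingNorm x = n1 + n2
      have hx12 : hammingNorm (x : ι → ZMod 2) = n1 + n2 := by
        rw [hn1, hn2, hammingNorm, Finset.card_filter, Finset.card_filter, Finset.card_filter,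
          ← Finset.sum_add_distrib]
        apply Finset.sum_congr rfl
        intro i _
        rcases zmod2_cases ((x : ι → ZMod 2) i) with h | h <;>
          rcases zmod2_cases (c i) with h' | h' <;> simp [h, h']
      -- hammingNorm (x + c) = n2 + n3
      have hxc23 : hammingNorm ((x : ι → ZMod 2) + c) = n2 + n3 := by
        rw [hn2, hn3, hammingNorm, Finset.card_filter, Finset.card_filter, Finset.card_filter,
          ← Finset.sum_add_distrib]
        apply Finset.sum_congr rfl
        intro i _
        have : ((x : ι → ZMod 2) + c) i = (x : ι → ZMod 2) i + c i := rfl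
        rw [this]
        rcases zmod2_cases ((x : ι → ZMod 2) i) with h | h <;>
          rcases zmod2_cases (c i) with h' | h' <;> simp [h, h'] <;> decide
      -- w = n1 + n3
      have hw13 : w = n1 + n3 := by
        rw [hn1, hn3, hw, hammingNorm, Finset.card_filter, Finset.card_filter, Finset.card_filter,
          ← Finset.sum_add_distrib]
        apply Finset.sum_congr rfl
        intro i _
        rcases zmod2_cases ((x : ι → ZMod 2) i) with h | h <;>
          rcases zmod2_cases (c i) with h' | h' <;> simp [h, h']
      have hxcC : (x : ι → ZMod 2) + c ∈ C := C.add_mem x.2 hcC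
      have hxc0 : (x : ι → ZMod 2) + c ≠ 0 := by
        intro h
        apply hxc
        have hcc : c + c = 0 := by
          funext i
          rcases zmod2_cases (c i) with h' | h' <;> simp [Pi.add_apply, h'] <;> decide
        calc (x : ι → ZMod 2) = (x : ι → ZMod 2) + (c + c) := by rw [hcc, add_zero]
          _ = ((x : ι → ZMod 2) + c) + c := by ring
          _ = c := by rw [h, zero_add]
      have hmin1 := hmin _ hxcC hxc0
      have hd1 := hd _ x.2 hx0
      rw [hxc23] at hmin1
      rw [hx12] at hd1
      rw [hy2]
      omega
    have hcard' : Fintype.card ι' = Fintype.card ι - w := by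
      have h1 : Fintype.card ι' = (Finset.univ.filter (fun i : ι => c i = 0)).card :=
        Fintype.card_subtype _
      have h2 := Finset.card_filter_add_card_filter_not
        (s := (Finset.univ : Finset ι)) (p := fun i => c i = 0)
      have h3 : (Finset.univ.filter (fun i : ι => ¬ c i = 0)).card = w := rfl
      have h4 : (Finset.univ : Finset ι).card = Fintype.card ι := Finset.card_univ
      omega
    have hIH := ih ι' ((d+1)/2) (LinearMap.range f) hrrank hd'
    have hwn : w ≤ Fintype.card ι := by
      have := Finset.card_filter_le (Finset.univ : Finset ι) (fun i => c i ≠ 0)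
      simpa [Finset.card_univ, hw, hammingNorm] using this
    have hdw : d ≤ w := hd c hcC hc0
    rw [Finset.sum_range_succ']
    have hterm : ∀ i, (d + 2^(i+1) - 1)/2^(i+1) = ((d+1)/2 + 2^i - 1)/2^i := fun i => div_step d i
    calc ∑ i ∈ range k, (d + 2^(i+1) - 1)/2^(i+1) + (d + 2^0 - 1)/2^0
        = ∑ i ∈ range k, ((d+1)/2 + 2^i - 1)/2^i + d := by
          rw [Finset.sum_congr rfl (fun i _ => hterm i)]
          norm_num
      _ ≤ (Fintype.card ι - w) + d := by
          rw [← hcard']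
          omega
      _ ≤ Fintype.card ι := by omega


/-- Griesmer bound for binary linear [n,k,d] codes. -/
theorem griesmer_bound (n k d : ℕ) (C : Submodule (ZMod 2) (Fin n → ZMod 2))
    (hk : Module.finrank (ZMod 2) C = k)
    (hd : ∀ w ∈ C, w ≠ 0 → d ≤ hammingNorm w) :
    ∑ i ∈ Finset.range k, ⌈(d : ℚ) / 2 ^ i⌉ ≤ (n : ℤ) := by
  have haux := griesmer_aux k (Fin n) d C hk hd
  rw [Fintype.card_fin] at haux
  calc ∑ i ∈ Finset.range k, ⌈(d : ℚ) / 2 ^ i⌉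
      = ∑ i ∈ Finset.range k, (((d + 2^i - 1)/2^i : ℕ) : ℤ) :=
        Finset.sum_congr rfl (fun i _ => ceil_eq_natdiv d i)
    _ = ((∑ i ∈ Finset.range k, (d + 2^i - 1)/2^i : ℕ) : ℤ) := by push_cast; rfl
    _ ≤ (n : ℤ) := by exact_mod_cast haux
end

section
/- Let C ⊆ F_2^n be a binary linear code and d ∈ ℕ such that 2d divides the Hamming weight of every word of C. Then for any fixed w ∈ C, the projection C_w of C onto the support of w (replacing each v ∈ C by its coordinatewise product v ∩ w) has the property that d divides the weight of every element of C_w. -/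
lemma key_weight_identity {n : ℕ} (v w : Fin n → ZMod 2) :
    hammingNorm (v + w) + 2 * hammingNorm (fun i => v i * w i)
      = hammingNorm v + hammingNorm w := by
  have h : ∀ a b : ZMod 2,
      ((if a + b ≠ 0 then 1 else 0) + 2 * (if a * b ≠ 0 then 1 else 0) : ℕ)
        = (if a ≠ 0 then 1 else 0) + (if b ≠ 0 then 1 else 0) := by decide
  simp only [hammingNorm, Finset.card_filter]
  rw [← Finset.sum_add_distrib, Finset.mul_sum, ← Finset.sum_add_distrib]
  exact Finset.sum_congr rfl fun i _ => h (v i) (w i)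

/-- If 2d divides the weight of every word of C, then d divides the weight of every
element of the projection of C onto the support of a fixed word w ∈ C. -/
theorem proj_support_weight_div (n d : ℕ) (C : Submodule (ZMod 2) (Fin n → ZMod 2))
    (hC : ∀ v ∈ C, 2 * d ∣ hammingNorm v)
    (w : Fin n → ZMod 2) (hw : w ∈ C) :
    ∀ v ∈ C, d ∣ hammingNorm (fun i => v i * w i) := by
  intro v hv
  have h1 := hC v hv
  have h2 := hC w hw
  have h3 := hC (v + w) (C.add_mem hv hw)
  have hk := key_weight_identity v w
  have hd : 2 * d ∣ 2 * hammingNorm (fun i => v i * w i) := by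
    have : 2 * hammingNorm (fun i => v i * w i)
        = (hammingNorm v + hammingNorm w) - hammingNorm (v + w) := by omega
    rw [this]
    exact Nat.dvd_sub (Nat.dvd_add h1 h2) h3
  exact Nat.dvd_of_mul_dvd_mul_left (by norm_num) hd
end

section
/- A binary linear [31, 5, 16] code has exactly 31 words of weight 16 and no word of weight strictly greater than 16. -/
set_option maxRecDepth 10000

/-- A binary linear [31,5,16] code has exactly 31 words of weight 16 and no word of
weight strictly greater than 16. -/
theorem code_31_5_16_weights (C : Submodule (ZMod 2) (Fin 31 → ZMod 2))
    (hk : Module.finrank (ZMod 2) C = 5)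
    (hd : ∀ w ∈ C, w ≠ 0 → 16 ≤ hammingNorm w) :
    {w : Fin 31 → ZMod 2 | w ∈ C ∧ hammingNorm w = 16}.ncard = 31 ∧
      ∀ w ∈ C, hammingNorm w ≤ 16 := by
  classical
  set S : Finset (Fin 31 → ZMod 2) := Finset.univ.filter (· ∈ C) with hS
  have hmemS : ∀ w, w ∈ S ↔ w ∈ C := by intro w; simp [hS]
  have hcardC : Fintype.card C = 32 := by
    have := Module.card_eq_pow_finrank (K := ZMod 2) (V := C)
    rw [hk, ZMod.card] at this
    exact this.trans (by norm_num)
  have hcardS : S.card = 32 := by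
    rw [← Set.ncard_coe_finset]
    have h1 : (S : Set (Fin 31 → ZMod 2)) = (C : Set (Fin 31 → ZMod 2)) := by
      ext w; simpa using hmemS w
    rw [h1, ← Nat.card_coe_set_eq]
    rw [Nat.card_eq_fintype_card] at *
    exact hcardC
  have h0S : (0 : Fin 31 → ZMod 2) ∈ S := (hmemS 0).2 C.zero_mem
  -- column counts
  have hcol : ∀ i : Fin 31, (S.filter (fun w => w i ≠ 0)).card ≤ 16 := by
    intro i
    set T := S.filter (fun w => w i ≠ 0) with hT
    by_cases hTe : T = ∅
    · simp [hTe]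
    · obtain ⟨w₀, hw₀⟩ := Finset.nonempty_of_ne_empty hTe
      have hw₀S : w₀ ∈ S := (Finset.mem_filter.1 hw₀).1
      have hw₀i : w₀ i ≠ 0 := (Finset.mem_filter.1 hw₀).2
      have hinj : ∀ a ∈ T, ∀ b ∈ T, a + w₀ = b + w₀ → a = b := by
        intro a _ b _ h; exact add_right_cancel h
      have hmap : ∀ a ∈ T, a + w₀ ∈ S \ T := by
        intro a ha
        have haS : a ∈ S := (Finset.mem_filter.1 ha).1
        have hai : a i ≠ 0 := (Finset.mem_filter.1 ha).2
        have hsum : a + w₀ ∈ S :=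
          (hmemS _).2 (C.add_mem ((hmemS a).1 haS) ((hmemS w₀).1 hw₀S))
        refine Finset.mem_sdiff.2 ⟨hsum, ?_⟩
        intro hmem
        have : (a + w₀) i ≠ 0 := (Finset.mem_filter.1 hmem).2
        apply this
        have key : ∀ x : ZMod 2, x ≠ 0 → x = 1 := by decide
        show (a + w₀) i = 0
        rw [Pi.add_apply, key _ hai, key _ hw₀i]
        decide
      have hle : T.card ≤ (S \ T).card := Finset.card_le_card_of_injOn _ hmap
        (fun a ha b hb h => hinj a ha b hb h)
      have : T.card + T.card ≤ S.card := by
        have hsub : T ⊆ S := fun a ha => (Finset.mem_filter.1 ha).1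
        have := Finset.card_sdiff_add_card_eq_card hsub
        omega
      omega
  -- total weight
  have hup : ∑ w ∈ S, hammingNorm w ≤ 496 := by
    have : ∑ w ∈ S, hammingNorm w = ∑ i : Fin 31, (S.filter (fun w => w i ≠ 0)).card := by
      calc ∑ w ∈ S, hammingNorm w
          = ∑ w ∈ S, ∑ i : Fin 31, (if w i ≠ 0 then 1 else 0) := by
            refine Finset.sum_congr rfl fun w _ => ?_
            rw [hammingNorm, Finset.card_filter]
        _ = ∑ i : Fin 31, ∑ w ∈ S, (if w i ≠ 0 then 1 else 0) := Finset.sum_comm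
        _ = ∑ i : Fin 31, (S.filter (fun w => w i ≠ 0)).card := by
            refine Finset.sum_congr rfl fun i _ => ?_
            rw [Finset.card_filter]
    rw [this]
    calc ∑ i : Fin 31, (S.filter (fun w => w i ≠ 0)).card ≤ ∑ _i : Fin 31, 16 :=
          Finset.sum_le_sum fun i _ => hcol i
      _ = 496 := by simp
  have hS' : ∑ w ∈ S.erase 0, hammingNorm w = ∑ w ∈ S, hammingNorm w := by
    rw [← Finset.add_sum_erase S _ h0S]; simp [hammingNorm]
  have hcarde : (S.erase 0).card = 31 := by rw [Finset.card_erase_of_mem h0S, hcardS]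
  have hlow : ∀ w ∈ S.erase 0, 16 ≤ hammingNorm w := by
    intro w hw
    exact hd w ((hmemS w).1 (Finset.mem_of_mem_erase hw)) (Finset.ne_of_mem_erase hw)
  have hall : ∀ w ∈ S.erase 0, hammingNorm w = 16 := by
    have hsum_le : ∑ w ∈ S.erase 0, hammingNorm w ≤ ∑ _w ∈ S.erase 0, 16 := by
      rw [hS']; simpa [hcarde] using hup
    have := (Finset.sum_eq_sum_iff_of_le hlow).1
      (le_antisymm (Finset.sum_le_sum hlow) hsum_le)
    intro w hw; exact (this w hw).symm
  constructor
  · have hset : {w : Fin 31 → ZMod 2 | w ∈ C ∧ hammingNorm w = 16} = ↑(S.erase 0) := by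
      ext w
      simp only [Set.mem_setOf_eq, Finset.coe_erase, Set.mem_diff, Finset.mem_coe, hmemS,
        Set.mem_singleton_iff]
      constructor
      · rintro ⟨hwC, hw16⟩
        refine ⟨hwC, ?_⟩
        rintro rfl; simp [hammingNorm] at hw16
      · rintro ⟨hwC, hw0⟩
        exact ⟨hwC, hall w (Finset.mem_erase.2 ⟨hw0, (hmemS w).2 hwC⟩)⟩
    rw [hset, Set.ncard_coe_finset, hcarde]
  · intro w hw
    by_cases h0 : w = 0
    · simp [h0, hammingNorm]
    · exact le_of_eq (hall w (Finset.mem_erase.2 ⟨h0, (hmemS w).2 hw⟩))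
end

section
/- A binary linear [16, 5, 8] code in which every word has weight divisible by 8 has exactly one word of weight 16 and exactly 30 words of weight 8. -/
private lemma arith_half (x y n : ℕ) (h1 : x = y) (h2 : x + y = n) (h3 : n = 32) :
    x = 16 := by omega

private lemma arith_part (c0 cn a b n : ℕ) (h1 : c0 + cn = n) (h2 : a + b = cn)
    (h3 : n = 32) : c0 + a + b = 32 := by omega

private lemma arith_final (a b total m : ℕ) (hsum : total = 8 * a + 16 * b)
    (htot : total = 16 * m) (hpart : 1 + a + b = 32) (hc0 : b ≤ 1) :
    b = 1 ∧ a = 30 := by omega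

/-- A binary linear [16,5,8] code all of whose weights are divisible by 8 has exactly
one word of weight 16 and exactly 30 words of weight 8. -/
theorem code_16_5_8_weights (C : Submodule (ZMod 2) (Fin 16 → ZMod 2))
    (hk : Module.finrank (ZMod 2) C = 5)
    (hd : ∀ w ∈ C, w ≠ 0 → 8 ≤ hammingNorm w)
    (h8 : ∀ w ∈ C, 8 ∣ hammingNorm w) :
    {w : Fin 16 → ZMod 2 | w ∈ C ∧ hammingNorm w = 16}.ncard = 1 ∧
      {w : Fin 16 → ZMod 2 | w ∈ C ∧ hammingNorm w = 8}.ncard = 30 := by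
  classical
  obtain ⟨S, hS⟩ : ∃ S : Finset (Fin 16 → ZMod 2), S = Finset.univ.filter (· ∈ C) := ⟨_, rfl⟩
  -- |C| = 32
  have hcard : S.card = 32 := by
    have h1 : Fintype.card C = 2 ^ 5 := by
      have := Module.card_eq_pow_finrank (K := ZMod 2) (V := C)
      rwa [hk, ZMod.card] at this
    have h2 : Fintype.card C = S.card := by rw [hS]; exact Fintype.card_subtype _
    omega
  have hmemS : ∀ w, w ∈ S ↔ w ∈ C := by intro w; rw [hS]; simp
  -- weights are 0, 8 or 16
  have hw : ∀ w ∈ S, hammingNorm w = 0 ∨ hammingNorm w = 8 ∨ hammingNorm w = 16 := by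
    intro w hwS
    have hwC : w ∈ C := (hmemS w).mp hwS
    by_cases h0 : w = 0
    · left; simp [h0]
    · right
      have hle : hammingNorm w ≤ 16 := by
        have := hammingNorm_le_card_fintype (x := w)
        simpa using this
      have hge := hd w hwC h0
      obtain ⟨k, hk'⟩ := h8 w hwC
      omega
  -- weight 16 means all-ones
  have hall : ∀ w : Fin 16 → ZMod 2, hammingNorm w = 16 → w = fun _ => 1 := by
    intro w hw16
    funext i
    have : ({j | w j ≠ 0} : Finset (Fin 16)) = Finset.univ := by
      apply Finset.eq_univ_of_card
      simpa [hammingNorm] using hw16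
    have hi : w i ≠ 0 := by
      have hmem : i ∈ ({j | w j ≠ 0} : Finset (Fin 16)) := by
        rw [this]; exact Finset.mem_univ i
      simpa using hmem
    revert hi
    generalize w i = a
    revert a; decide
  -- each coordinate count is 0 or 16
  have hcol : ∀ i : Fin 16, (S.filter (fun w => w i ≠ 0)).card = 0 ∨
      (S.filter (fun w => w i ≠ 0)).card = 16 := by
    intro i
    by_cases hz : ∀ w ∈ C, w i = 0
    · left
      rw [Finset.card_eq_zero, Finset.filter_eq_empty_iff]
      intro w hwS
      simp [hz w ((hmemS w).mp hwS)]
    · right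
      push_neg at hz
      obtain ⟨v, hvC, hvi⟩ := hz
      have hvv : v + v = 0 := by
        funext j
        show v j + v j = 0
        generalize v j = a; revert a; decide
      have hbij : (S.filter (fun w => w i ≠ 0)).card =
          (S.filter (fun w => ¬ w i ≠ 0)).card := by
        apply Finset.card_nbij' (fun w => w + v) (fun w => w + v)
        · intro w hwmem
          simp only [Finset.mem_coe, Finset.mem_filter, hS, Finset.mem_univ, true_and] at hwmem ⊢
          refine ⟨C.add_mem hwmem.1 hvC, ?_⟩
          have h1 : v i = 1 := by revert hvi; generalize v i = a; revert a; decide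
          have := hwmem.2
          show ¬ (w i + v i ≠ 0)
          rw [h1]
          revert this; generalize w i = a; revert a; decide
        · intro w hwmem
          simp only [Finset.mem_coe, Finset.mem_filter, hS, Finset.mem_univ, true_and] at hwmem ⊢
          refine ⟨C.add_mem hwmem.1 hvC, ?_⟩
          have h1 : v i = 1 := by revert hvi; generalize v i = a; revert a; decide
          have := hwmem.2
          show w i + v i ≠ 0
          rw [h1]
          revert this; generalize w i = a; revert a; decide
        · intro w _; show w + v + v = w; rw [add_assoc, hvv, add_zero]
        · intro w _; show w + v + v = w; rw [add_assoc, hvv, add_zero]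
      have hsplit : (S.filter (fun w => w i ≠ 0)).card +
          (S.filter (fun w => ¬ w i ≠ 0)).card = S.card :=
        Finset.card_filter_add_card_filter_not _
      exact arith_half _ _ _ hbij hsplit hcard
  -- total weight divisible by 16
  have htot : (16 : ℕ) ∣ ∑ w ∈ S, hammingNorm w := by
    have hswap : ∑ w ∈ S, hammingNorm w =
        ∑ i : Fin 16, (S.filter (fun w => w i ≠ 0)).card := by
      have : ∀ w : Fin 16 → ZMod 2, hammingNorm w =
          ∑ i : Fin 16, (if w i ≠ 0 then 1 else 0) := by
        intro w
        rw [hammingNorm, Finset.card_filter]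
      simp_rw [this]
      rw [Finset.sum_comm]
      congr 1
      funext i
      rw [Finset.card_filter]
    rw [hswap]
    apply Finset.dvd_sum
    intro i _
    rcases hcol i with h | h <;> simp [h]
  -- the three weight classes
  obtain ⟨W0, hW0⟩ : ∃ W : Finset (Fin 16 → ZMod 2), W = S.filter (fun w => hammingNorm w = 0) := ⟨_, rfl⟩
  obtain ⟨W8, hW8⟩ : ∃ W : Finset (Fin 16 → ZMod 2), W = S.filter (fun w => hammingNorm w = 8) := ⟨_, rfl⟩
  obtain ⟨W16, hW16⟩ : ∃ W : Finset (Fin 16 → ZMod 2), W = S.filter (fun w => hammingNorm w = 16) := ⟨_, rfl⟩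
  have hW0card : W0.card = 1 := by
    have : W0 = {0} := by
      ext w
      simp only [hW0, hS, Finset.mem_filter, Finset.mem_univ, true_and, Finset.mem_singleton]
      constructor
      · rintro ⟨_, h⟩; exact hammingNorm_eq_zero.mp h
      · rintro rfl; exact ⟨C.zero_mem, hammingNorm_zero⟩
    simp [this]
  have hW16le : W16.card ≤ 1 := by
    have : W16 ⊆ {fun _ => 1} := by
      intro w hwm
      simp only [hW16, Finset.mem_filter] at hwm
      simp [hall w hwm.2]
    calc W16.card ≤ ({fun _ => (1 : ZMod 2)} : Finset _).card := Finset.card_le_card this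
      _ = 1 := Finset.card_singleton _
  have hsum : ∑ w ∈ S, hammingNorm w = 8 * W8.card + 16 * W16.card := by
    rw [hW8, hW16]
    have : ∀ w ∈ S, hammingNorm w =
        8 * (if hammingNorm w = 8 then 1 else 0) + 16 * (if hammingNorm w = 16 then 1 else 0) := by
      intro w hwS
      rcases hw w hwS with h | h | h <;> simp [h]
    rw [Finset.sum_congr rfl this, Finset.sum_add_distrib, ← Finset.mul_sum, ← Finset.mul_sum,
      ← Finset.card_filter, ← Finset.card_filter]
  have hpart : W0.card + W8.card + W16.card = 32 := by
    have h1 : (S.filter (fun w => hammingNorm w = 0)).card +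
        (S.filter (fun w => ¬ hammingNorm w = 0)).card = S.card :=
      Finset.card_filter_add_card_filter_not _
    have h2 : ((S.filter (fun w => ¬ hammingNorm w = 0)).filter (fun w => hammingNorm w = 8)).card +
        ((S.filter (fun w => ¬ hammingNorm w = 0)).filter (fun w => ¬ hammingNorm w = 8)).card =
        (S.filter (fun w => ¬ hammingNorm w = 0)).card :=
      Finset.card_filter_add_card_filter_not _
    have e8 : (S.filter (fun w => ¬ hammingNorm w = 0)).filter (fun w => hammingNorm w = 8) = W8 := by
      ext w
      simp only [hW8, Finset.mem_filter]
      constructor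
      · rintro ⟨⟨h1, _⟩, h3⟩; exact ⟨h1, h3⟩
      · rintro ⟨h1, h3⟩; exact ⟨⟨h1, by omega⟩, h3⟩
    have e16 : (S.filter (fun w => ¬ hammingNorm w = 0)).filter (fun w => ¬ hammingNorm w = 8) = W16 := by
      ext w
      simp only [hW16, Finset.mem_filter]
      constructor
      · rintro ⟨⟨h1, h2'⟩, h3⟩
        rcases hw w h1 with h | h | h
        · omega
        · omega
        · exact ⟨h1, h⟩
      · rintro ⟨h1, h3⟩; exact ⟨⟨h1, by omega⟩, by omega⟩
    rw [e8, e16] at h2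
    rw [hW0]
    exact arith_part _ _ _ _ _ h1 h2 hcard
  -- conclude
  have hset16 : {w : Fin 16 → ZMod 2 | w ∈ C ∧ hammingNorm w = 16} = ↑W16 := by
    ext w
    simp [hW16, hS]
  have hset8 : {w : Fin 16 → ZMod 2 | w ∈ C ∧ hammingNorm w = 8} = ↑W8 := by
    ext w
    simp [hW8, hS]
  obtain ⟨m, hm⟩ := htot
  have hfinal : W16.card = 1 ∧ W8.card = 30 := by
    have := arith_final W8.card W16.card (∑ w ∈ S, hammingNorm w) m hsum hm (by omega) hW16le
    exact ⟨this.1, this.2⟩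
  constructor
  · rw [hset16, Set.ncard_coe_finset, hfinal.1]
  · rw [hset8, Set.ncard_coe_finset, hfinal.2]
end

section
/- Let C ⊆ F_2^65 be a binary linear code of dimension k ≥ 12 such that every nonzero word has weight in {24, 32, 40}. Then k = 12. -/
set_option maxHeartbeats 2000000
open Finset Module

lemma wt_add {ι : Type*} [Fintype ι] [DecidableEq ι] (u v : ι → ZMod 2) :
    hammingNorm u + hammingNorm v =
      hammingNorm (u + v) + 2 * (univ.filter fun i => u i ≠ 0 ∧ v i ≠ 0).card := by
  set A := univ.filter fun i => u i ≠ 0 with hA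
  set B := univ.filter fun i => v i ≠ 0 with hB
  have h1 : (A ∪ B).card + (A ∩ B).card = A.card + B.card :=
    Finset.card_union_add_card_inter A B
  have h2 : (univ.filter fun i => (u + v) i ≠ 0) = (A ∪ B) \ (A ∩ B) := by
    ext i
    simp only [hA, hB, Finset.mem_sdiff, Finset.mem_union, Finset.mem_inter,
      Finset.mem_filter, Finset.mem_univ, true_and, Pi.add_apply]
    generalize u i = x; generalize v i = y
    revert x y; decide
  have h3 : A ∩ B ⊆ A ∪ B := (Finset.inter_subset_left).trans Finset.subset_union_left
  have h4 : (A ∩ B).card ≤ (A ∪ B).card := Finset.card_le_card h3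
  have h5 : hammingNorm (u + v) = (A ∪ B).card - (A ∩ B).card := by
    rw [show hammingNorm (u+v) = (univ.filter fun i => (u + v) i ≠ 0).card from rfl, h2,
      Finset.card_sdiff_of_subset h3]
  have h6 : (univ.filter fun i => u i ≠ 0 ∧ v i ≠ 0) = A ∩ B := by
    ext i; simp [hA, hB, Finset.mem_filter]
  rw [show hammingNorm u = A.card from rfl, show hammingNorm v = B.card from rfl, h5, h6]
  omega

lemma self_orth {ι : Type*} [Fintype ι] (D : Submodule (ZMod 2) (ι → ZMod 2))
    (h : ∀ x ∈ D, ∀ y ∈ D, ∑ i, x i * y i = 0) :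
    2 * Module.finrank (ZMod 2) D ≤ Fintype.card ι := by
  classical
  set b := Pi.basisFun (ZMod 2) ι with hb
  have haux : ∀ v x : ι → ZMod 2, b.toDual v x = ∑ i, x i * v i := by
    intro v x
    conv_lhs => rw [← b.sum_repr x]
    rw [map_sum]
    refine Finset.sum_congr rfl fun i _ => ?_
    rw [map_smul, Basis.toDual_apply_left, smul_eq_mul]
    simp [hb, Pi.basisFun_repr]
  set Φ : (ι → ZMod 2) →ₗ[ZMod 2] Module.Dual (ZMod 2) D :=
    D.dualRestrict ∘ₗ b.toDualEquiv.toLinearMap with hΦ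
  have hsurj : Function.Surjective Φ :=
    (Subspace.dualRestrict_surjective).comp b.toDualEquiv.surjective
  have hker : D ≤ LinearMap.ker Φ := by
    intro v hv
    rw [LinearMap.mem_ker]
    ext u
    have : Φ v u = ∑ i, (u : ι → ZMod 2) i * v i := by
      simp only [hΦ, LinearMap.comp_apply, Submodule.dualRestrict_apply,
        LinearEquiv.coe_coe, Basis.toDualEquiv_apply]
      exact haux v u
    rw [this]
    simpa using h (u : ι → ZMod 2) u.2 v hv
  have hrn := LinearMap.finrank_range_add_finrank_ker Φ
  have hrange : LinearMap.range Φ = ⊤ := LinearMap.range_eq_top.2 hsurj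
  rw [hrange, finrank_top, Subspace.dual_finrank_eq,
    Module.finrank_fintype_fun_eq_card] at hrn
  have hle : finrank (ZMod 2) D ≤ finrank (ZMod 2) (LinearMap.ker Φ) :=
    Submodule.finrank_mono hker
  omega


lemma fiber_card {M W : Type*} [AddCommGroup M] [Module (ZMod 2) M] [Fintype M]
    [DecidableEq M] [AddCommGroup W] [Module (ZMod 2) W] [Fintype W] [DecidableEq W]
    (φ : M →ₗ[ZMod 2] W) (hφ : Function.Surjective φ) (y : W) :
    Fintype.card W * (univ.filter fun c => φ c = y).card = Fintype.card M := by
  have key : ∀ y z : W,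
      (univ.filter fun c => φ c = y).card = (univ.filter fun c => φ c = z).card := by
    intro y z
    obtain ⟨a, ha⟩ := hφ y
    obtain ⟨b, hb⟩ := hφ z
    apply Finset.card_bij (fun x _ => x - a + b)
    · intro x hx
      simp only [Finset.mem_filter, Finset.mem_univ, true_and] at hx ⊢
      simp [map_add, map_sub, ha, hb, hx]
    · intro x₁ h₁ x₂ h₂ h
      have := congrArg (fun t => t - b + a) h
      simpa using this
    · intro x hx
      refine ⟨x - b + a, ?_, by abel⟩
      simp only [Finset.mem_filter, Finset.mem_univ, true_and] at hx ⊢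
      simp [map_add, map_sub, ha, hb, hx]
  have hsum : Fintype.card M = ∑ z : W, (univ.filter fun c => φ c = z).card := by
    rw [← Finset.card_univ]
    exact Finset.card_eq_sum_card_fiberwise fun x _ => Finset.mem_univ (φ x)
  rw [hsum, Finset.sum_congr rfl fun z _ => key z y]
  simp [Finset.sum_const, mul_comm]

lemma no_3240 (C : Submodule (ZMod 2) (Fin 65 → ZMod 2))
    (hw : ∀ w ∈ C, w ≠ 0 → hammingNorm w = 32 ∨ hammingNorm w = 40)
    (hk : 12 ≤ Module.finrank (ZMod 2) C) : False := by
  classical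
  letI : Fintype C := Fintype.ofFinite C
  set N := Fintype.card C with hNdef
  have hN : N = 2 ^ (finrank (ZMod 2) C) := by
    have := card_eq_pow_finrank (K := ZMod 2) (V := C)
    rwa [ZMod.card 2] at this
  have hN4096 : 4096 ≤ N := by
    rw [hN]
    calc (4096 : ℕ) = 2 ^ 12 := by norm_num
    _ ≤ 2 ^ (finrank (ZMod 2) C) := Nat.pow_le_pow_right (by norm_num) hk
  -- column functionals and 0/1 integer values
  set f : Fin 65 → (C →ₗ[ZMod 2] ZMod 2) :=
    fun i => (LinearMap.proj i).comp C.subtype with hf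
  set v : Fin 65 → C → ℤ := fun i c => (((c : Fin 65 → ZMod 2) i).val : ℤ) with hv
  have hfc : ∀ i (c : C), f i c = (c : Fin 65 → ZMod 2) i := fun i c => rfl
  have hvite : ∀ i (c : C), v i c = if f i c = 1 then 1 else 0 := by
    intro i c
    show (((c : Fin 65 → ZMod 2) i).val : ℤ) = if (c : Fin 65 → ZMod 2) i = 1 then 1 else 0
    generalize (c : Fin 65 → ZMod 2) i = x
    revert x; decide
  set A : Fin 65 → ℤ := fun i => ∑ c : C, v i c with hA
  set B : Fin 65 → Fin 65 → ℤ := fun i j => ∑ c : C, v i c * v j c with hB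
  -- surjectivity of nonzero functionals
  have hzmod : ∀ x : ZMod 2, x = 0 ∨ x = 1 := by decide
  have hone : ∀ g : C →ₗ[ZMod 2] ZMod 2, g ≠ 0 → ∃ c, g c = 1 := by
    intro g hg
    by_contra h
    push_neg at h
    exact hg (LinearMap.ext fun c => by rcases hzmod (g c) with h0 | h1
                                        · simpa using h0
                                        · exact absurd h1 (h c))
  have hsurj1 : ∀ g : C →ₗ[ZMod 2] ZMod 2, g ≠ 0 → Function.Surjective g := by
    intro g hg y
    obtain ⟨c, hc⟩ := hone g hg
    rcases hzmod y with rfl | rfl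
    exacts [⟨0, map_zero g⟩, ⟨c, hc⟩]
  have hsurj2 : ∀ g h : C →ₗ[ZMod 2] ZMod 2, g ≠ 0 → h ≠ 0 → g ≠ h →
      Function.Surjective (g.prod h) := by
    intro g h hg hh hgh
    obtain ⟨a, ha⟩ := hone g hg
    obtain ⟨b, hb⟩ := hone h hh
    obtain ⟨e, he⟩ : ∃ e, g e ≠ h e := by
      by_contra hcon; push_neg at hcon; exact hgh (LinearMap.ext hcon)
    rintro ⟨y₁, y₂⟩
    have hcase : (g e = 1 ∧ h e = 0) ∨ (g e = 0 ∧ h e = 1) := by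
      rcases hzmod (g e) with h1 | h1 <;> rcases hzmod (h e) with h2 | h2 <;>
        simp [h1, h2] at he ⊢
    rcases hcase with ⟨he1, he2⟩ | ⟨he1, he2⟩
    · refine ⟨y₂ • b + (y₁ + y₂ * g b) • e, ?_⟩
      simp only [LinearMap.prod_apply, Function.prod, Prod.smul_mk, Prod.mk_add_mk, map_add, map_smul, smul_eq_mul,
        he1, he2, hb, Prod.mk.injEq]
      generalize g b = t
      revert y₁ y₂ t; decide
    · refine ⟨y₁ • a + (y₂ + y₁ * h a) • e, ?_⟩
      simp only [LinearMap.prod_apply, Function.prod, Prod.smul_mk, Prod.mk_add_mk, map_add, map_smul, smul_eq_mul,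
        he1, he2, ha, Prod.mk.injEq]
      generalize h a = t
      revert y₁ y₂ t; decide
  -- evaluation of A and B
  have hAcard : ∀ i, A i = ((univ.filter fun c : C => f i c = 1).card : ℤ) := by
    intro i
    rw [hA, ← Finset.sum_boole]
    exact Finset.sum_congr rfl fun c _ => hvite i c
  have hBcard : ∀ i j,
      B i j = ((univ.filter fun c : C => f i c = 1 ∧ f j c = 1).card : ℤ) := by
    intro i j
    rw [hB, ← Finset.sum_boole]
    refine Finset.sum_congr rfl fun c _ => ?_
    rw [hvite i c, hvite j c]
    by_cases h1 : f i c = 1 <;> by_cases h2 : f j c = 1 <;> simp [h1, h2]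
  have hAzero : ∀ i, f i = 0 → A i = 0 := by
    intro i hi
    rw [hAcard]
    have : (univ.filter fun c : C => f i c = 1).card = 0 := by
      rw [Finset.card_eq_zero, Finset.filter_eq_empty_iff]
      intro c _
      rw [hi]
      simp
    simp [this]
  have hAiN : ∀ i, f i ≠ 0 → 2 * A i = (N : ℤ) := by
    intro i hi
    rw [hAcard]
    have h := fiber_card (f i) (hsurj1 _ hi) 1
    rw [ZMod.card 2] at h
    exact_mod_cast h
  have hBzero : ∀ i j, f i = 0 ∨ f j = 0 → B i j = 0 := by
    intro i j hij
    rw [hBcard]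
    have h : (univ.filter fun c : C => f i c = 1 ∧ f j c = 1) = ∅ := by
      rw [Finset.filter_eq_empty_iff]
      intro c _ hc
      rcases hij with h | h
      · rw [h] at hc; simpa using hc.1
      · rw [h] at hc; simpa using hc.2
    simp [h]
  have hBdiagA : ∀ i, B i i = A i := by
    intro i
    rw [hBcard, hAcard]
    congr 2
    apply Finset.filter_congr
    intro c _
    rw [and_self]
  have hBii : ∀ i, f i ≠ 0 → 4 * B i i = 2 * (N : ℤ) := by
    intro i hi
    rw [hBdiagA]
    linarith [hAiN i hi]
  have hN4096' : (4096 : ℤ) ≤ (N : ℤ) := by exact_mod_cast hN4096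
  have hBij : ∀ i j, f i ≠ 0 → f j ≠ 0 → (N : ℤ) ≤ 4 * B i j := by
    intro i j hi hj
    by_cases hij : f i = f j
    · have hBA : B i j = A i := by
        rw [hBcard, hAcard]
        congr 2
        apply Finset.filter_congr
        intro c _
        rw [← hij, and_self]
      rw [hBA]
      linarith [hAiN i hi]
    · have hs := fiber_card ((f i).prod (f j)) (hsurj2 _ _ hi hj hij) (1, 1)
      rw [show Fintype.card (ZMod 2 × ZMod 2) = 4 by
        rw [Fintype.card_prod, ZMod.card 2]] at hs
      have hfilter : (univ.filter fun c : C => (f i).prod (f j) c = (1, 1))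
          = (univ.filter fun c : C => f i c = 1 ∧ f j c = 1) := by
        apply Finset.filter_congr
        intro c _
        simp [LinearMap.prod_apply, Prod.ext_iff]
      rw [hfilter] at hs
      rw [hBcard]
      exact_mod_cast hs.ge
  set wt : C → ℤ := fun c => (hammingNorm (c : Fin 65 → ZMod 2) : ℤ) with hwt
  have key0 : ∀ c : C, wt c = ∑ i, v i c := by
    intro c
    rw [hwt]
    show (((univ.filter fun i => (c : Fin 65 → ZMod 2) i ≠ 0).card : ℕ) : ℤ) = _
    rw [← Finset.sum_boole]
    refine Finset.sum_congr rfl fun i _ => ?_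
    show (if (c : Fin 65 → ZMod 2) i ≠ 0 then (1:ℤ) else 0) = (((c : Fin 65 → ZMod 2) i).val : ℤ)
    generalize (c : Fin 65 → ZMod 2) i = x
    revert x; decide
  have hmain : ∑ c : C, (wt c - 32) * (wt c - 40) = 1280 := by
    rw [Finset.sum_eq_single (0 : C)]
    · have h0 : wt 0 = 0 := by
        rw [hwt]
        show ((hammingNorm ((0 : C) : Fin 65 → ZMod 2) : ℕ) : ℤ) = 0
        rw [show ((0 : C) : Fin 65 → ZMod 2) = 0 from rfl, hammingNorm_zero]
        norm_num
      rw [h0]; norm_num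
    · intro b _ hb
      have hbne : (b : Fin 65 → ZMod 2) ≠ 0 := fun h => hb (by
        exact Subtype.ext h)
      have : wt b = 32 ∨ wt b = 40 := by
        rcases hw _ b.2 hbne with h | h
        · left; rw [hwt]; show ((hammingNorm (b : Fin 65 → ZMod 2) : ℕ) : ℤ) = 32
          rw [h]; norm_num
        · right; rw [hwt]; show ((hammingNorm (b : Fin 65 → ZMod 2) : ℕ) : ℤ) = 40
          rw [h]; norm_num
      rcases this with h | h <;> rw [h] <;> norm_num
    · intro h; exact absurd (Finset.mem_univ 0) h
  have hexp : (∑ c : C, wt c * wt c) - 72 * (∑ c : C, wt c) + 1280 * (N : ℤ) = 1280 := by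
    have e : ∑ c : C, (wt c - 32) * (wt c - 40)
        = ∑ c : C, (wt c * wt c - 72 * wt c + 1280) :=
      Finset.sum_congr rfl fun c _ => by ring
    rw [e, Finset.sum_add_distrib, Finset.sum_sub_distrib, ← Finset.mul_sum,
      Finset.sum_const, Finset.card_univ, nsmul_eq_mul] at hmain
    rw [hNdef]
    linarith [hmain]
  have hS1 : ∑ c : C, wt c = ∑ i : Fin 65, A i := by
    calc ∑ c : C, wt c = ∑ c : C, ∑ i : Fin 65, v i c :=
          Finset.sum_congr rfl fun c _ => key0 c
    _ = ∑ i : Fin 65, ∑ c : C, v i c := Finset.sum_comm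
  have hS2 : ∑ c : C, wt c * wt c = ∑ i : Fin 65, ∑ j : Fin 65, B i j := by
    calc ∑ c : C, wt c * wt c
        = ∑ c : C, ∑ i : Fin 65, ∑ j : Fin 65, v i c * v j c := by
          refine Finset.sum_congr rfl fun c _ => ?_
          rw [key0 c, Finset.sum_mul_sum]
    _ = ∑ i : Fin 65, ∑ c : C, ∑ j : Fin 65, v i c * v j c := Finset.sum_comm
    _ = ∑ i : Fin 65, ∑ j : Fin 65, ∑ c : C, v i c * v j c :=
          Finset.sum_congr rfl fun i _ => Finset.sum_comm
  set T : Finset (Fin 65) := univ.filter fun i => f i ≠ 0 with hT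
  set s : ℕ := T.card with hscard
  have hs65 : s ≤ 65 := by
    calc s ≤ (univ : Finset (Fin 65)).card := Finset.card_filter_le _ _
    _ = 65 := by simp
  have hS1T : ∑ i : Fin 65, A i = ∑ i ∈ T, A i := by
    refine (Finset.sum_subset (Finset.subset_univ T) fun i _ hi => ?_).symm
    refine hAzero i ?_
    by_contra hne
    exact hi (by simp [hT, hne])
  have h2S1 : 2 * ∑ i ∈ T, A i = (s : ℤ) * N := by
    rw [Finset.mul_sum, Finset.sum_congr rfl fun i hi => hAiN i (by
      simpa [hT] using hi), Finset.sum_const, nsmul_eq_mul]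
  have hS2T : ∑ i : Fin 65, ∑ j : Fin 65, B i j = ∑ i ∈ T, ∑ j ∈ T, B i j := by
    have h1 : ∀ i, ∑ j : Fin 65, B i j = ∑ j ∈ T, B i j := fun i =>
      (Finset.sum_subset (Finset.subset_univ T) fun j _ hj =>
        hBzero i j (Or.inr (by by_contra hne; exact hj (by simp [hT, hne])))).symm
    rw [Finset.sum_congr rfl fun i _ => h1 i]
    refine (Finset.sum_subset (Finset.subset_univ T) fun i _ hi => ?_).symm
    refine Finset.sum_eq_zero fun j _ => hBzero i j (Or.inl ?_)
    by_contra hne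
    exact hi (by simp [hT, hne])
  have hlow : (s : ℤ) * s * N + s * N ≤ 4 * ∑ i ∈ T, ∑ j ∈ T, B i j := by
    have inner : ∀ i ∈ T, ((s : ℤ) + 1) * N ≤ ∑ j ∈ T, 4 * B i j := by
      intro i hi
      have hfi : f i ≠ 0 := by simpa [hT] using hi
      rw [← Finset.add_sum_erase T _ hi]
      have hs1 : 1 ≤ s := by
        rw [hscard]
        exact Finset.card_pos.mpr ⟨i, hi⟩
      have h1 : ((s : ℤ) - 1) * N ≤ ∑ j ∈ T.erase i, 4 * B i j := by
        have hcard := Finset.card_nsmul_le_sum (T.erase i) (fun j => 4 * B i j) ((N : ℤ))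
          (fun j hj => hBij i j hfi (by
            simpa [hT] using Finset.mem_of_mem_erase hj))
        rw [Finset.card_erase_of_mem hi, nsmul_eq_mul] at hcard
        rw [← hscard] at hcard
        rwa [Nat.cast_sub hs1, Nat.cast_one] at hcard
      have h2 := hBii i hfi
      linarith [h1, h2]
    calc (s : ℤ) * s * N + s * N = ∑ _i ∈ T, (((s : ℤ) + 1) * N) := by
          rw [Finset.sum_const, ← hscard, nsmul_eq_mul]; ring
    _ ≤ ∑ i ∈ T, ∑ j ∈ T, 4 * B i j := Finset.sum_le_sum inner
    _ = 4 * ∑ i ∈ T, ∑ j ∈ T, B i j := by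
          rw [Finset.mul_sum]
          exact Finset.sum_congr rfl fun i _ => (Finset.mul_sum _ _ _).symm
  have hsZ : (s : ℤ) ≤ 65 := by exact_mod_cast hs65
  have hs0 : (0 : ℤ) ≤ (s : ℤ) := Nat.cast_nonneg s
  have h2S1' : 2 * (∑ c : C, wt c) = (s : ℤ) * N := by rw [hS1, hS1T]; exact h2S1
  have hlow' : (s : ℤ) * s * N + s * N ≤ 4 * (∑ c : C, wt c * wt c) := by
    rw [hS2, hS2T]; exact hlow
  have keyineq : (0 : ℤ) ≤ ((65 : ℤ) - s) * (78 - s) * N := by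
    have h1 : (0 : ℤ) ≤ (65 : ℤ) - s := by linarith
    have h2 : (0 : ℤ) ≤ (78 : ℤ) - s := by linarith
    have h3 : (0 : ℤ) ≤ (N : ℤ) := Nat.cast_nonneg N
    exact mul_nonneg (mul_nonneg h1 h2) h3
  nlinarith [keyineq, hN4096', hlow', h2S1', hexp]

/-- A binary linear code of length 65 with all nonzero weights in {24,32,40} and
dimension at least 12 has dimension exactly 12. -/
theorem dim_eq_twelve_of_65 (C : Submodule (ZMod 2) (Fin 65 → ZMod 2))
    (hw : ∀ w ∈ C, w ≠ 0 →
      hammingNorm w = 24 ∨ hammingNorm w = 32 ∨ hammingNorm w = 40)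
    (hk : 12 ≤ Module.finrank (ZMod 2) C) :
    Module.finrank (ZMod 2) C = 12 := by
  refine le_antisymm ?_ hk
  by_cases h24 : ∃ w ∈ C, hammingNorm w = 24
  · obtain ⟨w, hwC, hw24⟩ := h24
    set ι := {i : Fin 65 // w i ≠ 0} with hι
    have hcard : Fintype.card ι = 24 := by
      rw [Fintype.card_subtype]
      exact hw24
    set π : (Fin 65 → ZMod 2) →ₗ[ZMod 2] (ι → ZMod 2) :=
      LinearMap.funLeft (ZMod 2) (ZMod 2) Subtype.val with hπ
    set φ : C →ₗ[ZMod 2] (ι → ZMod 2) := π ∘ₗ C.subtype with hφ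
    have hφ_apply : ∀ (u : C) (i : ι), φ u i = (u : Fin 65 → ZMod 2) i.1 :=
      fun u i => rfl
    -- all weights in C divisible by 8
    have h8 : ∀ u ∈ C, 8 ∣ hammingNorm u := by
      intro u hu
      by_cases h0 : u = 0
      · rw [h0, hammingNorm_zero]
        exact dvd_zero 8
      · rcases hw u hu h0 with h | h | h <;> rw [h] <;> norm_num
    -- hammingNorm of projections counts the intersection with supp w
    have hπnorm : ∀ u : Fin 65 → ZMod 2,
        hammingNorm (π u) =
          ((Finset.univ.filter fun i : Fin 65 => u i ≠ 0 ∧ w i ≠ 0)).card := by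
      intro u
      rw [show hammingNorm (π u)
          = ((Finset.univ.filter fun i : ι => u i.1 ≠ 0)).card from rfl]
      apply Finset.card_bij (fun (i : ι) _ => i.1)
      · rintro ⟨i, hi⟩ h
        simp only [Finset.mem_filter, Finset.mem_univ, true_and] at h ⊢
        exact ⟨h, hi⟩
      · rintro ⟨i₁, h₁⟩ - ⟨i₂, h₂⟩ - h
        exact Subtype.ext h
      · intro i hi
        simp only [Finset.mem_filter, Finset.mem_univ, true_and] at hi
        exact ⟨⟨i, hi.2⟩, by simp [hi.1], rfl⟩
    -- injectivity of the projection restricted to C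
    have hinj : Function.Injective φ := by
      rw [← LinearMap.ker_eq_bot, Submodule.eq_bot_iff]
      rintro ⟨u, huC⟩ hu0
      rw [LinearMap.mem_ker] at hu0
      rw [Submodule.mk_eq_zero]
      by_contra hu
      have hzero : ∀ i : Fin 65, ¬(u i ≠ 0 ∧ w i ≠ 0) := by
        rintro i ⟨h1, h2⟩
        exact h1 (by simpa [hφ_apply] using congrFun hu0 ⟨i, h2⟩)
      have hadd := wt_add u w
      have hfilter : ((Finset.univ.filter fun i : Fin 65 => u i ≠ 0 ∧ w i ≠ 0)).card = 0 := by
        rw [Finset.card_eq_zero, Finset.filter_eq_empty_iff]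
        exact fun i _ => hzero i
      rw [hfilter, hw24] at hadd
      -- hadd : hammingNorm u + 24 = hammingNorm (u + w) + 0
      have huw : u + w ∈ C := C.add_mem huC hwC
      have huwne : u + w ≠ 0 := by
        intro h
        have : hammingNorm u + 24 = 0 := by rw [hadd, h, hammingNorm_zero]
        omega
      have h1 := hw u huC hu
      have h2 := hw (u + w) huw huwne
      omega
    set D := LinearMap.range φ with hD
    have hDC : finrank (ZMod 2) D = finrank (ZMod 2) C :=
      LinearMap.finrank_range_of_inj hinj
    -- all weights in D divisible by 4
    have hD4 : ∀ x ∈ D, 4 ∣ hammingNorm x := by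
      rintro x ⟨u, rfl⟩
      have hπu : φ u = π (u : Fin 65 → ZMod 2) := rfl
      rw [hπu, hπnorm]
      have hadd := wt_add (u : Fin 65 → ZMod 2) w
      have h1 := h8 _ u.2
      have h2 := h8 w hwC
      have h3 := h8 _ (C.add_mem u.2 hwC)
      omega
    -- self-orthogonality of D
    have horth : ∀ x ∈ D, ∀ y ∈ D, ∑ i, x i * y i = 0 := by
      intro x hx y hy
      have hx4 := hD4 x hx
      have hy4 := hD4 y hy
      have hxy4 := hD4 _ (D.add_mem hx hy)
      have hadd := wt_add x y
      set t := ((Finset.univ.filter fun i : ι => x i ≠ 0 ∧ y i ≠ 0)).card with ht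
      have hteven : 2 ∣ t := by omega
      have hsum : ∑ i, x i * y i = (t : ZMod 2) := by
        rw [ht, ← Finset.sum_boole]
        refine Finset.sum_congr rfl fun i _ => ?_
        generalize x i = a
        generalize y i = b
        revert a b; decide
      obtain ⟨m, hm⟩ := hteven
      rw [hsum, hm]
      push_cast
      rw [show ((2 : ZMod 2)) = 0 from rfl]
      ring
    have hbound := self_orth D horth
    rw [hcard, hDC] at hbound
    omega
  · push_neg at h24
    exact absurd hk fun _ => (no_3240 C
      (fun v hv hne => (hw v hv hne).resolve_left (h24 v hv)) hk)
end
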